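/- Let H be a separable Hilbert space and {f_j} a frame of H with frame transform θ : H → ℓ², θ(x) = (⟨x, f_j⟩)_j. Then θ* : ℓ² → H is surjective, and consequently {f_j} is a multiple of the sum of two normalized tight frames: there exist partial isometries W₁, W₂ on ℓ² (composed with the identification) and a constant c > 0 such that f_j = c(W₁(e_j)-part + W₂(e_j)-part), i.e., f_j = c(g_j + h_j) where {g_j} and {h_j} are normalized tight frames of H. -/

import Mathlib

open scoped InnerProductSpace

set_option maxHeartbeats 1600000 in
theorem stmt15 {H : Type*} [NormedAddCommGroup H] [InnerProductSpace ℂ H] [CompleteSpace H]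
    (f : ℕ → H) (C D : ℝ) (hC : 0 < C)
    (hframe : ∀ v : H, C * ‖v‖ ^ 2 ≤ ∑' j, ‖⟪v, f j⟫_ℂ‖ ^ 2 ∧
      ∑' j, ‖⟪v, f j⟫_ℂ‖ ^ 2 ≤ D * ‖v‖ ^ 2)
    (θ : H →L[ℂ] lp (fun _ : ℕ => ℂ) 2) (hθ : ∀ v j, θ v j = ⟪f j, v⟫_ℂ) :
    Function.Surjective (ContinuousLinearMap.adjoint θ) ∧
      ∃ c : ℝ, 0 < c ∧ ∃ g h : ℕ → H,
        (∀ v : H, ∑' j, ‖⟪v, g j⟫_ℂ‖ ^ 2 = ‖v‖ ^ 2) ∧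
        (∀ v : H, ∑' j, ‖⟪v, h j⟫_ℂ‖ ^ 2 = ‖v‖ ^ 2) ∧
        ∀ j, f j = (c : ℂ) • (g j + h j) := by
  classical
  set d : ℝ := max C D with hd
  have hd0 : 0 < d := lt_of_lt_of_le hC (le_max_left _ _)
  -- the frame operator
  set S : H →L[ℂ] H := ContinuousLinearMap.adjoint θ ∘L θ with hSdef
  have hS : IsSelfAdjoint S := by
    rw [IsSelfAdjoint, hSdef, ContinuousLinearMap.star_eq_adjoint,
      ContinuousLinearMap.adjoint_comp, ContinuousLinearMap.adjoint_adjoint]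
  -- sum of squares equals the lp norm squared
  have hnorm : ∀ v : H, ‖θ v‖ ^ 2 = ∑' j, ‖⟪v, f j⟫_ℂ‖ ^ 2 := by
    intro v
    have h2 : (0 : ℝ) < (2 : ENNReal).toReal := by norm_num
    have hlp := lp.norm_rpow_eq_tsum h2 (θ v)
    have h2' : (2 : ENNReal).toReal = (2 : ℝ) := by norm_num
    rw [h2'] at hlp
    calc ‖θ v‖ ^ 2 = ‖θ v‖ ^ (2 : ℝ) := by
          rw [← Real.rpow_natCast ‖θ v‖ 2]; norm_num
      _ = ∑' j, ‖θ v j‖ ^ (2 : ℝ) := hlp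
      _ = ∑' j, ‖⟪v, f j⟫_ℂ‖ ^ 2 := by
          refine tsum_congr fun j => ?_
          rw [hθ v j, ← norm_inner_symm, ← Real.rpow_natCast]
          norm_num
  have htj : ∀ (w : H), ∑' j, ‖θ w j‖ ^ 2 = ‖θ w‖ ^ 2 := by
    intro w
    rw [hnorm w]
    refine tsum_congr fun j => ?_
    rw [hθ w j, ← norm_inner_symm]
  have hSv : ∀ v : H, ⟪S v, v⟫_ℂ = (‖θ v‖ : ℂ) ^ 2 := by
    intro v
    rw [hSdef, ContinuousLinearMap.comp_apply, ContinuousLinearMap.adjoint_inner_left,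
      inner_self_eq_norm_sq_to_K]
    norm_cast
  have hSre : ∀ v : H, RCLike.re ⟪S v, v⟫_ℂ = ‖θ v‖ ^ 2 := by
    intro v
    rw [hSv v]
    norm_cast
  -- spectrum bounds
  have halg : ∀ r : ℝ, algebraMap ℝ (H →L[ℂ] H) r = (r : ℂ) • 1 := by
    intro r
    rw [Algebra.algebraMap_eq_smul_one]
    norm_num [← Complex.coe_smul]
  have halgSA : ∀ r : ℝ, IsSelfAdjoint (algebraMap ℝ (H →L[ℂ] H) r) := fun r =>
    IsSelfAdjoint.algebraMap _ (star_trivial r)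
  have hre : ∀ (r : ℝ) (x : H), RCLike.re ⟪((r : ℂ) • (1 : H →L[ℂ] H)) x, x⟫_ℂ = r * ‖x‖ ^ 2 := by
    intro r x
    rw [ContinuousLinearMap.smul_apply, ContinuousLinearMap.one_apply, inner_smul_left,
      inner_self_eq_norm_sq_to_K]
    simp [Complex.conj_ofReal, ← Complex.ofReal_pow, ← Complex.ofReal_mul]
  have hlow : algebraMap ℝ (H →L[ℂ] H) C ≤ S := by
    rw [ContinuousLinearMap.le_def]
    refine ⟨(ContinuousLinearMap.isSelfAdjoint_iff_isSymmetric).mp (hS.sub (halgSA C)), fun x => ?_⟩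
    rw [ContinuousLinearMap.reApplyInnerSelf, ContinuousLinearMap.sub_apply, inner_sub_left,
      map_sub, hSre x, halg C, hre C x, hnorm x, sub_nonneg]
    exact (hframe x).1
  have hhigh : S ≤ algebraMap ℝ (H →L[ℂ] H) d := by
    rw [ContinuousLinearMap.le_def]
    refine ⟨(ContinuousLinearMap.isSelfAdjoint_iff_isSymmetric).mp ((halgSA d).sub hS), fun x => ?_⟩
    rw [ContinuousLinearMap.reApplyInnerSelf, ContinuousLinearMap.sub_apply, inner_sub_left,
      map_sub, hSre x, halg d, hre d x, hnorm x, sub_nonneg]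
    exact le_trans (hframe x).2 (by nlinarith [sq_nonneg ‖x‖, le_max_right C D])
  have hspec : ∀ x ∈ spectrum ℝ S, C ≤ x ∧ x ≤ d := by
    intro x hx
    exact ⟨(algebraMap_le_iff_le_spectrum hS).mp hlow x hx,
      (le_algebraMap_iff_spectrum_le hS).mp hhigh x hx⟩
  -- continuity facts on the spectrum
  have hcsqrt : ContinuousOn (fun x : ℝ => Real.sqrt x) (spectrum ℝ S) :=
    Real.continuous_sqrt.continuousOn
  have hcinv : ContinuousOn (fun x : ℝ => (Real.sqrt x)⁻¹) (spectrum ℝ S) := by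
    refine ContinuousOn.inv₀ Real.continuous_sqrt.continuousOn fun x hx => ?_
    exact ne_of_gt (Real.sqrt_pos.mpr (lt_of_lt_of_le hC (hspec x hx).1))
  have hcK : ContinuousOn (fun x : ℝ => Real.sqrt (1 - x / d)) (spectrum ℝ S) := by
    fun_prop
  have hcA : ContinuousOn (fun x : ℝ => Real.sqrt x / Real.sqrt d) (spectrum ℝ S) := by
    fun_prop
  have hcid : ContinuousOn (id : ℝ → ℝ) (spectrum ℝ S) := continuousOn_id
  have hcinvx : ContinuousOn (fun x : ℝ => x⁻¹) (spectrum ℝ S) := by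
    refine ContinuousOn.inv₀ continuousOn_id fun x hx => ?_
    exact ne_of_gt (lt_of_lt_of_le hC (hspec x hx).1)
  -- surjectivity
  have hSinv : S * cfc (fun x : ℝ => x⁻¹) S = 1 := by
    nth_rewrite 1 [← cfc_id ℝ S hS]
    rw [← cfc_mul _ _ S hcid hcinvx, ← cfc_one ℝ S hS]
    apply cfc_congr
    intro x hx
    have hx0 : (0:ℝ) < x := lt_of_lt_of_le hC (hspec x hx).1
    simp only [id_eq, Pi.one_apply]
    field_simp
  have hsurj : Function.Surjective (ContinuousLinearMap.adjoint θ) := by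
    intro y
    refine ⟨θ (cfc (fun x : ℝ => x⁻¹) S y), ?_⟩
    have := congrArg (fun M : H →L[ℂ] H => M y) hSinv
    simpa [hSdef] using this
  refine ⟨hsurj, ?_⟩
  -- the operators
  set c : ℝ := Real.sqrt d with hc
  have hc0 : 0 < c := Real.sqrt_pos.mpr hd0
  set T : H →L[ℂ] H := cfc (fun x : ℝ => (Real.sqrt x)⁻¹) S with hT
  set A : H →L[ℂ] H := cfc (fun x : ℝ => Real.sqrt x / c) S with hA
  set K : H →L[ℂ] H := cfc (fun x : ℝ => Real.sqrt (1 - x / d)) S with hK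
  set B : H →L[ℂ] H := A + Complex.I • K with hB
  have hTsa : IsSelfAdjoint T := cfc_predicate _ S
  have hAsa : IsSelfAdjoint A := cfc_predicate _ S
  have hKsa : IsSelfAdjoint K := cfc_predicate _ S
  have hBstar : star B = A - Complex.I • K := by
    rw [hB, star_add, star_smul, hAsa.star_eq, hKsa.star_eq, Complex.star_def, Complex.conj_I,
      neg_smul, sub_eq_add_neg]
  -- algebraic identities
  have hAK : A * K = K * A := by
    rw [hA, hK, ← cfc_mul _ _ S hcA hcK, ← cfc_mul _ _ S hcK hcA]
    exact cfc_congr fun x _ => mul_comm _ _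
  have hAAKK : A * A + K * K = 1 := by
    rw [hA, hK, ← cfc_mul _ _ S hcA hcA, ← cfc_mul _ _ S hcK hcK,
      ← cfc_add S (fun x => Real.sqrt x / c * (Real.sqrt x / c)) (fun x => Real.sqrt (1 - x / d) * Real.sqrt (1 - x / d)) (hcA.mul hcA) (hcK.mul hcK), ← cfc_one ℝ S hS]
    apply cfc_congr
    intro x hx
    have h1 : (0:ℝ) ≤ x := le_trans hC.le (hspec x hx).1
    have h3 : (0:ℝ) ≤ 1 - x / d := by
      rw [sub_nonneg, div_le_one hd0]; exact (hspec x hx).2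
    simp only [Pi.add_apply, Pi.one_apply]
    rw [div_mul_div_comm, Real.mul_self_sqrt h1, Real.mul_self_sqrt h3, hc,
      Real.mul_self_sqrt hd0.le]
    field_simp
    ring
  have hBB : B * star B = 1 := by
    rw [hB, hBstar, mul_sub, add_mul, add_mul, mul_smul_comm, smul_mul_assoc,
      smul_mul_assoc, mul_smul_comm, smul_smul, Complex.I_mul_I, hAK, neg_one_smul]
    rw [← hAAKK]
    abel
  have hB'B : star B * B = 1 := by
    rw [hB, hBstar, sub_mul, mul_add, mul_add, mul_smul_comm, smul_mul_assoc,
      smul_mul_assoc, mul_smul_comm, smul_smul, Complex.I_mul_I, hAK, neg_one_smul]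
    rw [← hAAKK]
    abel
  have hTST : T * (S * T) = 1 := by
    rw [hT]
    nth_rewrite 2 [← cfc_id ℝ S hS]
    rw [← cfc_mul _ _ S hcid hcinv, ← cfc_mul (fun x : ℝ => (Real.sqrt x)⁻¹) (fun x => id x * (Real.sqrt x)⁻¹) S hcinv (hcid.mul hcinv),
      ← cfc_one ℝ S hS]
    apply cfc_congr
    intro x hx
    have hx0 : (0:ℝ) < x := lt_of_lt_of_le hC (hspec x hx).1
    have hs : Real.sqrt x * Real.sqrt x = x := Real.mul_self_sqrt hx0.le
    have hs0 : Real.sqrt x ≠ 0 := ne_of_gt (Real.sqrt_pos.mpr hx0)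
    simp only [id_eq, Pi.one_apply]
    field_simp
    rw [sq, hs]
  have hTsym : (T : H →ₗ[ℂ] H).IsSymmetric :=
    (ContinuousLinearMap.isSelfAdjoint_iff_isSymmetric).mp hTsa
  -- the key tightness computation
  have key : ∀ U : H →L[ℂ] H, U * star U = 1 →
      ∀ v : H, ∑' j, ‖⟪v, U (T (f j))⟫_ℂ‖ ^ 2 = ‖v‖ ^ 2 := by
    intro U hU v
    set w : H := T ((star U) v) with hw
    have h1 : ∀ j, ‖⟪v, U (T (f j))⟫_ℂ‖ = ‖θ w j‖ := by
      intro j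
      rw [hθ]
      have e1 : ⟪v, U (T (f j))⟫_ℂ = ⟪(star U) v, T (f j)⟫_ℂ := by
        rw [ContinuousLinearMap.star_eq_adjoint, ContinuousLinearMap.adjoint_inner_left]
      have e2 : ⟪(star U) v, T (f j)⟫_ℂ = ⟪w, f j⟫_ℂ := by
        rw [hw]
        exact (hTsym ((star U) v) (f j)).symm
      rw [e1, e2, ← norm_inner_symm]
    have h2 : (‖θ w‖ : ℂ) ^ 2 = (‖v‖ : ℂ) ^ 2 := by
      have e3 : ⟪S w, w⟫_ℂ = ⟪(T * (S * T)) ((star U) v), (star U) v⟫_ℂ := by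
        rw [hw]
        simp only [ContinuousLinearMap.mul_apply]
        exact (hTsym _ _).symm
      have e4 : ⟪(star U) v, (star U) v⟫_ℂ = ⟪v, v⟫_ℂ := by
        have h5 : U ((star U) v) = v := by
          rw [← ContinuousLinearMap.mul_apply, hU, ContinuousLinearMap.one_apply]
        calc ⟪(star U) v, (star U) v⟫_ℂ = ⟪v, U ((star U) v)⟫_ℂ := by
              rw [ContinuousLinearMap.star_eq_adjoint, ContinuousLinearMap.adjoint_inner_left]
          _ = ⟪v, v⟫_ℂ := by rw [h5]
      calc (‖θ w‖ : ℂ) ^ 2 = ⟪S w, w⟫_ℂ := (hSv w).symm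
        _ = ⟪(T * (S * T)) ((star U) v), (star U) v⟫_ℂ := e3
        _ = ⟪(star U) v, (star U) v⟫_ℂ := by rw [hTST, ContinuousLinearMap.one_apply]
        _ = ⟪v, v⟫_ℂ := e4
        _ = (‖v‖ : ℂ) ^ 2 := by rw [inner_self_eq_norm_sq_to_K]; norm_cast
    have h2' : ‖θ w‖ ^ 2 = ‖v‖ ^ 2 := by
      have := h2
      norm_cast at this
    calc ∑' j, ‖⟪v, U (T (f j))⟫_ℂ‖ ^ 2 = ∑' j, ‖θ w j‖ ^ 2 := by
          exact tsum_congr fun j => by rw [h1 j]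
      _ = ‖θ w‖ ^ 2 := htj w
      _ = ‖v‖ ^ 2 := h2'
  -- the decomposition
  have hAT : A * T = algebraMap ℝ (H →L[ℂ] H) c⁻¹ := by
    rw [hA, hT, ← cfc_mul _ _ S hcA hcinv, ← cfc_const c⁻¹ S hS]
    apply cfc_congr
    intro x hx
    have hx0 : (0:ℝ) < x := lt_of_lt_of_le hC (hspec x hx).1
    have hs0 : Real.sqrt x ≠ 0 := ne_of_gt (Real.sqrt_pos.mpr hx0)
    show Real.sqrt x / c * (Real.sqrt x)⁻¹ = c⁻¹
    rw [div_mul_eq_mul_div, mul_inv_cancel₀ hs0, one_div]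
  refine ⟨c / 2, by positivity, fun j => B (T (f j)), fun j => (star B) (T (f j)),
    key B hBB, key (star B) (by rw [star_star]; exact hB'B), fun j => ?_⟩
  have hATx : A (T (f j)) = ((c⁻¹ : ℝ) : ℂ) • f j := by
    have h6 : (A * T) (f j) = (algebraMap ℝ (H →L[ℂ] H) c⁻¹) (f j) := by rw [hAT]
    rw [ContinuousLinearMap.mul_apply] at h6
    rw [h6, halg, ContinuousLinearMap.smul_apply, ContinuousLinearMap.one_apply]
  have hsum : B (T (f j)) + (star B) (T (f j)) = ((c⁻¹ : ℝ) : ℂ) • f j + ((c⁻¹ : ℝ) : ℂ) • f j := by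
    rw [hB, hBstar, ContinuousLinearMap.add_apply, ContinuousLinearMap.sub_apply,
      ContinuousLinearMap.smul_apply, hATx]
    abel
  rw [hsum, smul_add, smul_smul, ← add_smul]
  have : ((c / 2 : ℝ) : ℂ) * ((c⁻¹ : ℝ) : ℂ) + ((c / 2 : ℝ) : ℂ) * ((c⁻¹ : ℝ) : ℂ) = 1 := by
    have : (c : ℂ) ≠ 0 := by exact_mod_cast ne_of_gt hc0
    push_cast
    field_simp
    ring
  rw [this, one_smul]
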